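/- Let Ψ : [0,π] → [0,π] be a measurable function such that for every continuous convex function F : [0,π] → ℝ one has ∫₀^π F(Ψ(θ))·sin θ dθ ≤ ∫₀^π F(θ)·sin θ dθ. Then for every a ∈ (0,π] there exists x ∈ (0,a) with Ψ(x) ≥ x; equivalently, there exists a sequence of points x_i > 0 tending to 0 with Ψ(x_i) ≥ x_i for all i. -/

import Mathlib

open Real MeasureTheory Set

/-- If a measurable `Ψ : [0,π] → [0,π]` satisfies
`∫₀^π F(Ψ θ) sin θ dθ ≤ ∫₀^π F(θ) sin θ dθ` for every continuous convex `F`, then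
there are points arbitrarily close to `0` at which `Ψ` lies at or above the identity. -/
theorem points_above_identity_near_zero (Ψ : ℝ → ℝ)
    (hmeas : Measurable Ψ)
    (hmaps : ∀ θ ∈ Icc (0:ℝ) π, Ψ θ ∈ Icc (0:ℝ) π)
    (hint : ∀ F : ℝ → ℝ, ContinuousOn F (Icc (0:ℝ) π) → ConvexOn ℝ (Icc (0:ℝ) π) F →
      ∫ θ in (0:ℝ)..π, F (Ψ θ) * Real.sin θ ≤ ∫ θ in (0:ℝ)..π, F θ * Real.sin θ) :
    ∀ a ∈ Ioc (0:ℝ) π, ∃ x ∈ Ioo (0:ℝ) a, x ≤ Ψ x := by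
  intro a ha
  obtain ⟨ha0, haπ⟩ := ha
  by_contra hcon
  push_neg at hcon
  have hπ : (0:ℝ) < π := Real.pi_pos
  set F : ℝ → ℝ := fun θ => max (a - θ) 0 with hFdef
  have hFcont : Continuous F := (continuous_const.sub continuous_id).max continuous_const
  have hFconv : ConvexOn ℝ (Icc (0:ℝ) π) F := by
    have h1 : ConvexOn ℝ (Icc (0:ℝ) π) (fun θ : ℝ => a - θ) := by
      refine ⟨convex_Icc 0 π, ?_⟩
      intro x _ y _ p q hp hq hpq
      simp only [smul_eq_mul]
      nlinarith
    exact h1.sup (convexOn_const 0 (convex_Icc (0:ℝ) π))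
  have key := hint F hFcont.continuousOn hFconv
  have hFnonneg : ∀ x, 0 ≤ F x := fun x => le_max_right _ _
  have hFanti : ∀ x y : ℝ, x ≤ y → F y ≤ F x := fun x y hxy =>
    max_le_max (by linarith) le_rfl
  have hFle : ∀ x : ℝ, 0 ≤ x → F x ≤ a := by
    intro x hx
    exact max_le (by linarith) (le_of_lt ha0)
  -- the difference function
  set g : ℝ → ℝ := fun θ => (F (Ψ θ) - F θ) * Real.sin θ with hgdef
  -- g ≥ 0 on Ioc 0 π
  have hg_nonneg : ∀ θ ∈ Ioc (0:ℝ) π, 0 ≤ g θ := by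
    intro θ hθ
    have hsin : 0 ≤ Real.sin θ := Real.sin_nonneg_of_nonneg_of_le_pi hθ.1.le hθ.2
    have hFF : F θ ≤ F (Ψ θ) := by
      rcases lt_or_ge θ a with hlt | hle
      · exact hFanti _ _ (hcon θ ⟨hθ.1, hlt⟩).le
      · have : F θ = 0 := max_eq_right (by linarith)
        rw [this]; exact hFnonneg _
    have : 0 ≤ F (Ψ θ) - F θ := by linarith
    exact mul_nonneg this hsin
  -- g > 0 on Ioo 0 a
  have hg_pos : ∀ θ ∈ Ioo (0:ℝ) a, 0 < g θ := by
    intro θ hθ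
    have hθπ : θ < π := lt_of_lt_of_le hθ.2 haπ
    have hsin : 0 < Real.sin θ := Real.sin_pos_of_pos_of_lt_pi hθ.1 hθπ
    have hΨ : Ψ θ < θ := hcon θ hθ
    have h1 : F θ = a - θ := max_eq_left (by linarith [hθ.2])
    have h2 : a - Ψ θ ≤ F (Ψ θ) := le_max_left _ _
    have : 0 < F (Ψ θ) - F θ := by rw [h1]; linarith
    exact mul_pos this hsin
  -- measurability / integrability
  have hf1m : AEStronglyMeasurable (fun θ => F (Ψ θ) * Real.sin θ)
      (volume.restrict (Ioc (0:ℝ) π)) :=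
    ((hFcont.measurable.comp hmeas).mul Real.measurable_sin).aestronglyMeasurable
  have hf2m : AEStronglyMeasurable (fun θ => F θ * Real.sin θ)
      (volume.restrict (Ioc (0:ℝ) π)) :=
    (hFcont.measurable.mul Real.measurable_sin).aestronglyMeasurable
  have hconst : IntegrableOn (fun _ : ℝ => a) (Ioc (0:ℝ) π) volume :=
    integrableOn_const measure_Ioc_lt_top.ne
  have hmem : ∀ᵐ θ ∂(volume.restrict (Ioc (0:ℝ) π)), θ ∈ Ioc (0:ℝ) π :=
    ae_restrict_mem measurableSet_Ioc
  have hbound : ∀ θ ∈ Ioc (0:ℝ) π, ‖F (Ψ θ) * Real.sin θ‖ ≤ a := by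
    intro θ hθ
    have hΨθ := hmaps θ ⟨hθ.1.le, hθ.2⟩
    have h1 : F (Ψ θ) ≤ a := hFle _ hΨθ.1
    have : ‖F (Ψ θ) * Real.sin θ‖ = F (Ψ θ) * |Real.sin θ| := by
      rw [norm_mul, Real.norm_eq_abs, Real.norm_eq_abs, abs_of_nonneg (hFnonneg _)]
    rw [this]
    calc F (Ψ θ) * |Real.sin θ| ≤ a * 1 :=
          mul_le_mul h1 (Real.abs_sin_le_one θ) (abs_nonneg _) ha0.le
      _ = a := mul_one a
  have hbound2 : ∀ θ ∈ Ioc (0:ℝ) π, ‖F θ * Real.sin θ‖ ≤ a := by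
    intro θ hθ
    have h1 : F θ ≤ a := hFle _ hθ.1.le
    have : ‖F θ * Real.sin θ‖ = F θ * |Real.sin θ| := by
      rw [norm_mul, Real.norm_eq_abs, Real.norm_eq_abs, abs_of_nonneg (hFnonneg _)]
    rw [this]
    calc F θ * |Real.sin θ| ≤ a * 1 :=
          mul_le_mul h1 (Real.abs_sin_le_one θ) (abs_nonneg _) ha0.le
      _ = a := mul_one a
  have hI1 : IntegrableOn (fun θ => F (Ψ θ) * Real.sin θ) (Ioc (0:ℝ) π) volume :=
    hconst.mono' hf1m (hmem.mono fun θ hθ => hbound θ hθ)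
  have hI2 : IntegrableOn (fun θ => F θ * Real.sin θ) (Ioc (0:ℝ) π) volume :=
    hconst.mono' hf2m (hmem.mono fun θ hθ => hbound2 θ hθ)
  have hIg : IntegrableOn g (Ioc (0:ℝ) π) volume := by
    have : g = fun θ => F (Ψ θ) * Real.sin θ - F θ * Real.sin θ := by
      funext θ; simp [hgdef]; ring
    rw [this]
    exact hI1.sub hI2
  -- positivity of ∫ g over Ioo 0 a
  have hIg' : IntegrableOn g (Ioo (0:ℝ) a) volume :=
    hIg.mono_set (fun x hx => ⟨hx.1, le_trans hx.2.le haπ⟩)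
  have hpos : 0 < ∫ θ in Ioo (0:ℝ) a, g θ := by
    have hae : 0 ≤ᵐ[volume.restrict (Ioo (0:ℝ) a)] g := by
      filter_upwards [ae_restrict_mem measurableSet_Ioo] with θ hθ
      exact (hg_pos θ hθ).le
    rw [setIntegral_pos_iff_support_of_nonneg_ae hae hIg']
    have hsub : Ioo (0:ℝ) a ⊆ Function.support g := fun θ hθ => (hg_pos θ hθ).ne'
    rw [Set.inter_eq_right.mpr hsub, Real.volume_Ioo]
    simpa using ha0
  -- compare integrals over Ioo 0 a and Ioc 0 π
  have hmono : ∫ θ in Ioo (0:ℝ) a, g θ ≤ ∫ θ in Ioc (0:ℝ) π, g θ := by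
    apply setIntegral_mono_set hIg
    · filter_upwards [ae_restrict_mem measurableSet_Ioc] with θ hθ
      exact hg_nonneg θ hθ
    · exact HasSubset.Subset.eventuallyLE (fun x hx => ⟨hx.1, le_trans hx.2.le haπ⟩)
  have hsplit : ∫ θ in Ioc (0:ℝ) π, g θ
      = (∫ θ in Ioc (0:ℝ) π, F (Ψ θ) * Real.sin θ)
        - ∫ θ in Ioc (0:ℝ) π, F θ * Real.sin θ := by
    rw [← integral_sub hI1 hI2]
    congr 1
    funext θ
    simp [hgdef]; ring
  -- transfer to interval integrals
  rw [intervalIntegral.integral_of_le hπ.le, intervalIntegral.integral_of_le hπ.le] at key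
  have : 0 < ∫ θ in Ioc (0:ℝ) π, g θ := lt_of_lt_of_le hpos hmono
  rw [hsplit] at this
  linarith
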